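/- Let Π be an orthogonal projection on ℂ^n, Π^⊥ = I − Π, and U_⊥ a unitary with U_⊥ Π^⊥ U_⊥† = Π. On ℂ^2 ⊗ ℂ^n (ancilla first), define U_tot = (|1⟩⟨1| ⊗ I_n + |0⟩⟨0| ⊗ U_⊥)(I_2 ⊗ Π + σ_x ⊗ Π^⊥), where σ_x is the Pauli X matrix. Then for every n×n matrix ρ, the partial trace over the ancilla of U_tot (|1⟩⟨1| ⊗ ρ) U_tot† equals Π ρ Π + U_⊥ Π^⊥ ρ Π^⊥ U_⊥†. Here the partial trace over the first (2-dimensional) factor of a (2n)×(2n) matrix, written in 2×2 block form with n×n blocks, is the sum of its two diagonal blocks. -/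

import Mathlib

open Matrix
open Kronecker

/-- Partial trace over the first (2-dimensional, ancilla) factor of a matrix on
`ℂ² ⊗ ℂⁿ`: the sum of the two diagonal `n × n` blocks. -/
noncomputable def trAncilla (n : ℕ) (M : Matrix (Fin 2 × Fin n) (Fin 2 × Fin n) ℂ) :
    Matrix (Fin n) (Fin n) ℂ :=
  Matrix.of fun i j => ∑ a : Fin 2, M (a, i) (a, j)

lemma kron_conjTranspose {n : ℕ} (A : Matrix (Fin 2) (Fin 2) ℂ)
    (B : Matrix (Fin n) (Fin n) ℂ) : (A ⊗ₖ B)ᴴ = Aᴴ ⊗ₖ Bᴴ := by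
  ext ⟨a, i⟩ ⟨b, j⟩
  simp [conjTranspose_apply, kroneckerMap_apply]

lemma std_conjTranspose (a b : Fin 2) :
    (Matrix.single a b (1 : ℂ))ᴴ = Matrix.single b a (1 : ℂ) := by
  ext i j
  simp [conjTranspose_apply, Matrix.single, and_comm]

lemma trA_kron {n : ℕ} (a b : Fin 2) (X : Matrix (Fin n) (Fin n) ℂ) :
    trAncilla n (Matrix.single a b (1 : ℂ) ⊗ₖ X) = if a = b then X else 0 := by
  ext i j
  by_cases h : a = b <;>
    simp [trAncilla, kroneckerMap_apply, Matrix.single, Fin.sum_univ_two, h] <;>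
    fin_cases a <;> fin_cases b <;> simp_all

lemma trA_add {n : ℕ} (M N : Matrix (Fin 2 × Fin n) (Fin 2 × Fin n) ℂ) :
    trAncilla n (M + N) = trAncilla n M + trAncilla n N := by
  ext i j
  simp [trAncilla, Finset.sum_add_distrib]


lemma std_mul (a b c d : Fin 2) :
    Matrix.single a b (1 : ℂ) * Matrix.single c d (1 : ℂ)
      = if b = c then Matrix.single a d (1 : ℂ) else 0 := by
  by_cases h : b = c
  · subst h; simp
  · rw [if_neg h]
    exact Matrix.single_mul_single_of_ne (c := (1 : ℂ)) a b c h 1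

/-- Coherent-feedback implementation of the subspace-pumping map (steps (1)-(4)
of the protocol): with the ancilla initialized in `|1⟩`, conjugating by
`U_tot = (|1⟩⟨1| ⊗ I + |0⟩⟨0| ⊗ U_⊥)(I ⊗ P + σ_x ⊗ P^⊥)` and tracing out the
ancilla realizes `E_S(ρ) = P ρ P + U_⊥ P^⊥ ρ P^⊥ U_⊥†`. -/
theorem coherent_feedback_realizes_pumping (n : ℕ)
    (P : Matrix (Fin n) (Fin n) ℂ) (hP : P.IsHermitian) (hP2 : P * P = P)
    (U : Matrix (Fin n) (Fin n) ℂ) (hU : U ∈ Matrix.unitaryGroup (Fin n) ℂ)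
    (hUperp : U * (1 - P) * Uᴴ = P)
    (Utot : Matrix (Fin 2 × Fin n) (Fin 2 × Fin n) ℂ)
    (hUtot : Utot =
      (Matrix.single (1 : Fin 2) 1 (1 : ℂ) ⊗ₖ (1 : Matrix (Fin n) (Fin n) ℂ)
          + Matrix.single (0 : Fin 2) 0 (1 : ℂ) ⊗ₖ U)
        * ((1 : Matrix (Fin 2) (Fin 2) ℂ) ⊗ₖ P + !![0, 1; 1, 0] ⊗ₖ (1 - P)))
    (ρ : Matrix (Fin n) (Fin n) ℂ) :
    trAncilla n (Utot * (Matrix.single (1 : Fin 2) 1 (1 : ℂ) ⊗ₖ ρ) * Utotᴴ)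
      = P * ρ * P + U * (1 - P) * ρ * (1 - P) * Uᴴ := by
  set Q : Matrix (Fin n) (Fin n) ℂ := 1 - P with hQ
  have hσ : (!![0, 1; 1, 0] : Matrix (Fin 2) (Fin 2) ℂ)
      = Matrix.single (0 : Fin 2) (1 : Fin 2) 1 + Matrix.single (1 : Fin 2) (0 : Fin 2) 1 := by
    ext i j
    fin_cases i <;> fin_cases j <;> simp [Matrix.single]
  have hone : (1 : Matrix (Fin 2) (Fin 2) ℂ)
      = Matrix.single (0 : Fin 2) (0 : Fin 2) 1 + Matrix.single (1 : Fin 2) (1 : Fin 2) 1 := by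
    ext i j
    fin_cases i <;> fin_cases j <;> simp [Matrix.single]
  have hQH : Qᴴ = Q := by
    rw [hQ, conjTranspose_sub, conjTranspose_one, hP.eq]
  have hUexp : Utot = Matrix.single (1 : Fin 2) (1 : Fin 2) (1 : ℂ) ⊗ₖ P
      + Matrix.single (1 : Fin 2) (0 : Fin 2) (1 : ℂ) ⊗ₖ Q
      + Matrix.single (0 : Fin 2) (0 : Fin 2) (1 : ℂ) ⊗ₖ (U * P)
      + Matrix.single (0 : Fin 2) (1 : Fin 2) (1 : ℂ) ⊗ₖ (U * Q) := by
    rw [hUtot, hσ, hone]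
    simp only [add_kronecker, mul_add, add_mul, ← mul_kronecker_mul]
    simp only [std_mul, Fin.isValue]
    norm_num [zero_kronecker]
    abel
  have hUH : Utotᴴ = Matrix.single (1 : Fin 2) (1 : Fin 2) (1 : ℂ) ⊗ₖ P
      + Matrix.single (0 : Fin 2) (1 : Fin 2) (1 : ℂ) ⊗ₖ Q
      + Matrix.single (0 : Fin 2) (0 : Fin 2) (1 : ℂ) ⊗ₖ (P * Uᴴ)
      + Matrix.single (1 : Fin 2) (0 : Fin 2) (1 : ℂ) ⊗ₖ (Q * Uᴴ) := by
    rw [hUexp]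
    simp only [conjTranspose_add, kron_conjTranspose, std_conjTranspose,
      conjTranspose_mul, hP.eq, hQH]
  have hPQ : P * Q = 0 := by rw [hQ]; simp [mul_sub, hP2]
  have hQP : Q * P = 0 := by rw [hQ]; simp [sub_mul, hP2]
  have hmid : Utot * (Matrix.single (1 : Fin 2) (1 : Fin 2) (1 : ℂ) ⊗ₖ ρ)
      = Matrix.single (1 : Fin 2) (1 : Fin 2) (1 : ℂ) ⊗ₖ (P * ρ)
      + Matrix.single (0 : Fin 2) (1 : Fin 2) (1 : ℂ) ⊗ₖ (U * Q * ρ) := by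
    rw [hUexp]
    simp only [add_mul, ← mul_kronecker_mul]
    simp only [std_mul, Fin.isValue]
    norm_num [zero_kronecker, mul_assoc]
  have hfull : Utot * (Matrix.single (1 : Fin 2) (1 : Fin 2) (1 : ℂ) ⊗ₖ ρ) * Utotᴴ
      = Matrix.single (1 : Fin 2) (1 : Fin 2) (1 : ℂ) ⊗ₖ (P * ρ * P)
      + Matrix.single (1 : Fin 2) (0 : Fin 2) (1 : ℂ) ⊗ₖ (P * ρ * (Q * Uᴴ))
      + Matrix.single (0 : Fin 2) (1 : Fin 2) (1 : ℂ) ⊗ₖ (U * Q * ρ * P)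
      + Matrix.single (0 : Fin 2) (0 : Fin 2) (1 : ℂ) ⊗ₖ (U * Q * ρ * (Q * Uᴴ)) := by
    rw [hmid, hUH]
    simp only [add_mul, mul_add, ← mul_kronecker_mul]
    simp only [std_mul, Fin.isValue]
    norm_num [zero_kronecker]
    abel
  rw [hfull, trA_add, trA_add, trA_add, trA_kron, trA_kron, trA_kron, trA_kron]
  simp only [if_pos rfl, if_neg (zero_ne_one (α := Fin 2)),
    if_neg (one_ne_zero (α := Fin 2)), add_zero, zero_add]
  rw [hQ]
  noncomm_ring
  abel
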